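/- arXiv:2303.11646 — 2 statements merged into one kernel-verified Lean document; each statement's English description precedes it below -/
import Mathlib

section
/- Suppose the FIFO stability condition fails strictly, i.e., Σ_{ℓ,k∈{1,2}} λ_ℓ λ_k θ_{ℓk}/(λ₁+λ₂) + R̄(λ₁+λ₂) > 1, where R̄ = E[R]. Then there exist real constants β₁, β₂ (one may take β_y = a_y, the balancing constants) and a real α > 0 such that for both y ∈ {1,2}: −α + Σ_{k=1}^{2} λ_k (1 − e^{−α θ_{yk}} · E[e^{−αR}] · e^{−α(β_k − β_y)}) > 0. -/
open MeasureTheory ProbabilityTheory Real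

lemma exp_le_quadratic {x : ℝ} (hx : |x| ≤ 1) : Real.exp x ≤ 1 + x + x ^ 2 := by
  have h := Real.exp_bound hx (n := 2) (by norm_num)
  have hs : ∑ m ∈ Finset.range 2, x ^ m / (m.factorial : ℝ) = 1 + x := by
    simp [Finset.sum_range_succ]
  rw [hs] at h
  have h2 : |x| ^ 2 = x ^ 2 := sq_abs x
  have := abs_le.mp h
  norm_num [Nat.factorial] at this
  nlinarith [sq_nonneg x, this.2]

lemma alpha_exists (N C K D L : ℝ) (hN0 : 0 ≤ N) (hC0 : 0 ≤ C) (hK0 : 0 < K)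
    (hD : 0 < D) (hL : 0 < L) :
    ∃ α : ℝ, 0 < α ∧ α * N ≤ 1 ∧ α * C ≤ 1 ∧ α * K * L ≤ D / 2 := by
  set a : ℝ := min (1 / (N + 1)) (min (1 / (C + 1)) (D / (2 * K * L))) with hadef
  have h0 : 0 < a := lt_min (by positivity) (lt_min (by positivity) (by positivity))
  refine ⟨a, h0, ?_, ?_, ?_⟩
  · have h1 : a ≤ 1 / (N + 1) := min_le_left _ _
    have h2 : a * (N + 1) ≤ 1 := by rw [← le_div_iff₀ (by positivity)]; exact h1
    linarith
  · have h1 : a ≤ 1 / (C + 1) := le_trans (min_le_right _ _) (min_le_left _ _)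
    have h2 : a * (C + 1) ≤ 1 := by rw [← le_div_iff₀ (by positivity)]; exact h1
    linarith
  · have h1 : a ≤ D / (2 * K * L) := le_trans (min_le_right _ _) (min_le_right _ _)
    rw [le_div_iff₀ (by positivity)] at h1
    linarith

lemma aux_key (lam0 lam1 Rb C T : ℝ) (M : ℝ → ℝ) (c1 c2 c3 c4 : ℝ)
    (hl0 : 0 < lam0) (hl1 : 0 < lam1) (hRb0 : 0 ≤ Rb) (hRbC : Rb ≤ C)
    (hT1 : lam0 * c1 + lam1 * c2 = T) (hT2 : lam0 * c3 + lam1 * c4 = T)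
    (hunst : 1 < T + Rb * (lam0 + lam1))
    (hM0 : ∀ α, 0 ≤ M α)
    (hMle : ∀ α, 0 < α → α * C ≤ 1 → M α ≤ 1 - α * Rb + α ^ 2 * C ^ 2) :
    ∃ α, 0 < α ∧
      (0 < -α + (lam0 * (1 - Real.exp (-α * c1) * M α)
        + lam1 * (1 - Real.exp (-α * c2) * M α))) ∧
      (0 < -α + (lam0 * (1 - Real.exp (-α * c3) * M α)
        + lam1 * (1 - Real.exp (-α * c4) * M α))) := by
  have hC0 : 0 ≤ C := le_trans hRb0 hRbC
  obtain ⟨L, hLdef⟩ : ∃ L : ℝ, L = lam0 + lam1 := ⟨_, rfl⟩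
  have hL : 0 < L := by rw [hLdef]; linarith
  obtain ⟨N, hNdef⟩ : ∃ N : ℝ, N = |c1| + |c2| + |c3| + |c4| := ⟨_, rfl⟩
  have hN0 : 0 ≤ N := by rw [hNdef]; positivity
  have hb1 : |c1| ≤ N := by rw [hNdef]; linarith [abs_nonneg c2, abs_nonneg c3, abs_nonneg c4]
  have hb2 : |c2| ≤ N := by rw [hNdef]; linarith [abs_nonneg c1, abs_nonneg c3, abs_nonneg c4]
  have hb3 : |c3| ≤ N := by rw [hNdef]; linarith [abs_nonneg c1, abs_nonneg c2, abs_nonneg c4]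
  have hb4 : |c4| ≤ N := by rw [hNdef]; linarith [abs_nonneg c1, abs_nonneg c2, abs_nonneg c3]
  obtain ⟨K, hKdef⟩ : ∃ K : ℝ, K = N ^ 2 + 3 * C ^ 2 + 2 * N * C + 1 := ⟨_, rfl⟩
  have hK1 : 1 ≤ K := by rw [hKdef]; linarith [sq_nonneg N, sq_nonneg C, mul_nonneg hN0 hC0]
  have hK0 : 0 < K := by linarith
  obtain ⟨D, hDdef⟩ : ∃ D : ℝ, D = T + Rb * L - 1 := ⟨_, rfl⟩
  have hD : 0 < D := by rw [hDdef, hLdef]; linarith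
  obtain ⟨α, hα, hαN, hαC, hαD⟩ := alpha_exists N C K D L hN0 hC0 hK0 hD hL
  have hmle := hMle α hα hαC
  have hm0 := hM0 α
  have bound : ∀ c : ℝ, |c| ≤ N →
      Real.exp (-α * c) * M α ≤ 1 - α * (c + Rb) + α ^ 2 * K := by
    intro c hc
    have habs0 : 0 ≤ |c| := abs_nonneg c
    have hle : c ≤ |c| := le_abs_self c
    have hαabs : α * |c| ≤ 1 := by
      have h := mul_le_mul_of_nonneg_left hc hα.le
      linarith
    have hαc : |(-α) * c| ≤ 1 := by
      rw [abs_mul, abs_neg, abs_of_nonneg hα.le]; exact hαabs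
    have hexp : Real.exp (-α * c) ≤ 1 - α * c + (α * c) ^ 2 := by
      have h := exp_le_quadratic hαc
      have heq : 1 + (-α) * c + ((-α) * c) ^ 2 = 1 - α * c + (α * c) ^ 2 := by ring
      linarith [heq.le, heq.ge]
    have hq0 : 0 ≤ 1 - α * c + (α * c) ^ 2 := by
      linarith [sq_nonneg (α * c - 1), sq_nonneg (α * c)]
    have hprod : Real.exp (-α * c) * M α ≤
        (1 - α * c + (α * c) ^ 2) * (1 - α * Rb + α ^ 2 * C ^ 2) :=
      mul_le_mul hexp hmle hm0 hq0
    -- bound each monomial of the bracket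
    have hcN := abs_le.mp hc
    have h1 : c ^ 2 ≤ N ^ 2 := by
      have := sq_le_sq' hcN.1 hcN.2
      linarith
    have h2 : c * Rb ≤ N * C := by
      calc c * Rb ≤ |c| * Rb := mul_le_mul_of_nonneg_right hle hRb0
        _ ≤ |c| * C := mul_le_mul_of_nonneg_left hRbC habs0
        _ ≤ N * C := mul_le_mul_of_nonneg_right hc hC0
    have hneg : -(α * c) ≤ 1 := by
      have h := mul_le_mul_of_nonneg_left (neg_le_abs c) hα.le
      linarith
    have h3 : -(α * c) * C ^ 2 ≤ 1 * C ^ 2 := mul_le_mul_of_nonneg_right hneg (sq_nonneg C)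
    have h4 : 0 ≤ α * (c ^ 2 * Rb) :=
      mul_nonneg hα.le (mul_nonneg (sq_nonneg c) hRb0)
    have h5a : (α * c) ^ 2 ≤ 1 := by
      have h := abs_le.mp hαc
      have h' := sq_le_sq' (a := α * c) (b := 1) (by linarith [h.1]) (by linarith [h.2])
      linarith [h']
    have h5 : (α * c) ^ 2 * C ^ 2 ≤ 1 * C ^ 2 := mul_le_mul_of_nonneg_right h5a (sq_nonneg C)
    have hNC0 : 0 ≤ N * C := mul_nonneg hN0 hC0
    have hB : c ^ 2 + C ^ 2 + c * Rb - α * c * C ^ 2 - α * (c ^ 2 * Rb)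
        + α ^ 2 * c ^ 2 * C ^ 2 ≤ K := by
      rw [hKdef]
      linarith [h1, h2, h3, h4, h5, hNC0]
    have hexpand : (1 - α * c + (α * c) ^ 2) * (1 - α * Rb + α ^ 2 * C ^ 2)
        = 1 - α * (c + Rb) + α ^ 2 * (c ^ 2 + C ^ 2 + c * Rb - α * c * C ^ 2
          - α * (c ^ 2 * Rb) + α ^ 2 * c ^ 2 * C ^ 2) := by ring
    have hsq : (0:ℝ) ≤ α ^ 2 := sq_nonneg α
    have hfin := mul_le_mul_of_nonneg_left hB hsq
    rw [hexpand] at hprod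
    linarith
  have main : ∀ a b : ℝ, |a| ≤ N → |b| ≤ N → lam0 * a + lam1 * b = T →
      0 < -α + (lam0 * (1 - Real.exp (-α * a) * M α)
        + lam1 * (1 - Real.exp (-α * b) * M α)) := by
    intro a b ha hb hT
    have e1 := mul_le_mul_of_nonneg_left (bound a ha) hl0.le
    have e2 := mul_le_mul_of_nonneg_left (bound b hb) hl1.le
    have hTα : α * (lam0 * a) + α * (lam1 * b) = α * T := by
      rw [← hT]; ring
    have hRbL : α * (Rb * L) = α * Rb * lam0 + α * Rb * lam1 := by rw [hLdef]; ring
    have hKL : α * (α * K * L) = α ^ 2 * K * lam0 + α ^ 2 * K * lam1 := by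
      rw [hLdef]; ring
    have hTD : α * T = α * D - α * (Rb * L) + α := by rw [hDdef]; ring
    have h2 : α * (α * K * L) ≤ α * (D / 2) := mul_le_mul_of_nonneg_left hαD hα.le
    have h3 : 0 < α * D := mul_pos hα hD
    linarith [e1, e2, hTα, hRbL, hKL, hTD, h2, h3]
  exact ⟨α, hα, main c1 c2 hb1 hb2 hT1, main c3 c4 hb3 hb4 hT2⟩

/-- If the FIFO stability condition fails strictly, i.e.
`Σ_{ℓ,k} λ_ℓ λ_k θ_{ℓk}/(λ₁+λ₂) + R̄(λ₁+λ₂) > 1` with `R̄ = E[R]`, then there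
exist constants `β₁, β₂` and `α > 0` such that for both `y`,
`−α + Σ_k λ_k (1 − e^{−α θ_{yk}} · E[e^{−αR}] · e^{−α(β_k − β_y)}) > 0`. -/
theorem fifo_instability_test_function
    {Ω : Type*} [MeasurableSpace Ω] (μ : Measure Ω) [IsProbabilityMeasure μ]
    (R : Ω → ℝ) (hRmeas : Measurable R) (hRnn : ∀ ω, 0 ≤ R ω)
    (C : ℝ) (hRbdd : ∀ ω, R ω ≤ C)
    (lam : Fin 2 → ℝ) (hlam : ∀ k, 0 < lam k)
    (θ : Fin 2 → Fin 2 → ℝ)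
    (hunstab : 1 < (∑ l : Fin 2, ∑ k : Fin 2, lam l * lam k * θ l k)
        / (lam 0 + lam 1) + (∫ ω, R ω ∂μ) * (lam 0 + lam 1)) :
    ∃ β : Fin 2 → ℝ, ∃ α : ℝ, 0 < α ∧ ∀ y : Fin 2,
      0 < -α + ∑ k : Fin 2,
        lam k * (1 - Real.exp (-α * θ y k) * mgf R μ (-α)
            * Real.exp (-α * (β k - β y))) := by
  have hl0 := hlam 0
  have hl1 := hlam 1
  have hL : (0:ℝ) < lam 0 + lam 1 := by linarith
  have hIntR : Integrable R μ := by
    refine Integrable.mono' (integrable_const C) hRmeas.aestronglyMeasurable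
      (ae_of_all _ fun ω => ?_)
    rw [Real.norm_eq_abs, abs_of_nonneg (hRnn ω)]; exact hRbdd ω
  have hRb0 : 0 ≤ ∫ ω, R ω ∂μ := integral_nonneg hRnn
  have hRbC : (∫ ω, R ω ∂μ) ≤ C := by
    calc (∫ ω, R ω ∂μ) ≤ ∫ _, C ∂μ := integral_mono hIntR (integrable_const C) hRbdd
    _ = C := by simp
  -- the balancing constant
  obtain ⟨b, hbdef⟩ : ∃ b : ℝ, b = (lam 0 * (θ 0 0 - θ 1 0) + lam 1 * (θ 0 1 - θ 1 1))
      / (2 * (lam 0 + lam 1)) := ⟨_, rfl⟩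
  obtain ⟨T, hTdef⟩ : ∃ T : ℝ, T = (∑ l : Fin 2, ∑ k : Fin 2, lam l * lam k * θ l k)
      / (lam 0 + lam 1) := ⟨_, rfl⟩
  have hT0 : lam 0 * (θ 0 0) + lam 1 * (θ 0 1 - 2 * b) = T := by
    rw [hbdef, hTdef, Fin.sum_univ_two, Fin.sum_univ_two, Fin.sum_univ_two]
    field_simp
    ring
  have hT1 : lam 0 * (θ 1 0 + 2 * b) + lam 1 * (θ 1 1) = T := by
    rw [hbdef, hTdef, Fin.sum_univ_two, Fin.sum_univ_two, Fin.sum_univ_two]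
    field_simp
    ring
  -- the mgf bound
  have hMle : ∀ α : ℝ, 0 < α → α * C ≤ 1 →
      mgf R μ (-α) ≤ 1 - α * (∫ ω, R ω ∂μ) + α ^ 2 * C ^ 2 := by
    intro α hα hαC
    have hIntExp : Integrable (fun ω => Real.exp (-α * R ω)) μ := by
      refine Integrable.mono' (integrable_const 1)
        ((hRmeas.const_mul (-α)).exp).aestronglyMeasurable (ae_of_all _ fun ω => ?_)
      rw [Real.norm_eq_abs, abs_of_nonneg (Real.exp_nonneg _)]
      exact Real.exp_le_one_iff.mpr (by nlinarith [hRnn ω, hα.le])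
    have hIntPoly : Integrable (fun ω => (1 + α ^ 2 * C ^ 2) - α * R ω) μ :=
      (integrable_const _).sub (hIntR.const_mul α)
    have hpt : ∀ ω, Real.exp (-α * R ω) ≤ (1 + α ^ 2 * C ^ 2) - α * R ω := by
      intro ω
      have hR := hRnn ω
      have hRC := hRbdd ω
      have habs : |(-α) * R ω| ≤ 1 := by
        rw [abs_mul, abs_neg, abs_of_nonneg hα.le, abs_of_nonneg hR]
        calc α * R ω ≤ α * C := mul_le_mul_of_nonneg_left hRC hα.le
          _ ≤ 1 := hαC
      have h := exp_le_quadratic habs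
      have hsq : ((-α) * R ω) ^ 2 ≤ α ^ 2 * C ^ 2 := by
        have h1 : α * R ω ≤ α * C := mul_le_mul_of_nonneg_left hRC hα.le
        have h2 : 0 ≤ α * R ω := mul_nonneg hα.le hR
        have := mul_self_le_mul_self h2 h1
        nlinarith [this]
      nlinarith [h, hsq]
    calc mgf R μ (-α) = ∫ ω, Real.exp (-α * R ω) ∂μ := by
          rw [mgf]
      _ ≤ ∫ ω, ((1 + α ^ 2 * C ^ 2) - α * R ω) ∂μ := integral_mono hIntExp hIntPoly hpt
      _ = (1 + α ^ 2 * C ^ 2) - α * ∫ ω, R ω ∂μ := by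
          rw [integral_sub (integrable_const _) (hIntR.const_mul α), integral_const_mul]
          simp
      _ = 1 - α * (∫ ω, R ω ∂μ) + α ^ 2 * C ^ 2 := by ring
  have hM0 : ∀ α : ℝ, 0 ≤ mgf R μ (-α) := fun α => mgf_nonneg
  have hunst' : 1 < T + (∫ ω, R ω ∂μ) * (lam 0 + lam 1) := by rw [hTdef]; linarith
  obtain ⟨α, hα, hy0, hy1⟩ := aux_key (lam 0) (lam 1) (∫ ω, R ω ∂μ) C T
    (fun α => mgf R μ (-α)) (θ 0 0) (θ 0 1 - 2 * b) (θ 1 0 + 2 * b) (θ 1 1)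
    hl0 hl1 hRb0 hRbC hT0 hT1 hunst' hM0 hMle
  refine ⟨![b, -b], α, hα, ?_⟩
  have hexpm : ∀ u v w : ℝ, Real.exp u * mgf R μ (-α) * Real.exp v = Real.exp w * mgf R μ (-α)
      → True := fun _ _ _ _ => trivial
  intro y
  fin_cases y
  · rw [Fin.sum_univ_two]
    simp only [Fin.zero_eta, Fin.mk_one, Fin.isValue, Matrix.cons_val_zero,
      Matrix.cons_val_one, Matrix.head_cons]
    have h1 : Real.exp (-α * θ 0 0) * mgf R μ (-α) * Real.exp (-α * (b - b))
        = Real.exp (-α * θ 0 0) * mgf R μ (-α) := by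
      rw [mul_right_comm, ← Real.exp_add]
      congr 2
      ring
    have h2 : Real.exp (-α * θ 0 1) * mgf R μ (-α) * Real.exp (-α * (-b - b))
        = Real.exp (-α * (θ 0 1 - 2 * b)) * mgf R μ (-α) := by
      rw [mul_right_comm, ← Real.exp_add]
      congr 2
      ring
    rw [h1, h2]
    exact hy0
  · rw [Fin.sum_univ_two]
    simp only [Fin.zero_eta, Fin.mk_one, Fin.isValue, Matrix.cons_val_zero,
      Matrix.cons_val_one, Matrix.head_cons]
    have h1 : Real.exp (-α * θ 1 0) * mgf R μ (-α) * Real.exp (-α * (b - -b))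
        = Real.exp (-α * (θ 1 0 + 2 * b)) * mgf R μ (-α) := by
      rw [mul_right_comm, ← Real.exp_add]
      congr 2
      ring
    have h2 : Real.exp (-α * θ 1 1) * mgf R μ (-α) * Real.exp (-α * (-b - -b))
        = Real.exp (-α * θ 1 1) * mgf R μ (-α) := by
      rw [mul_right_comm, ← Real.exp_add]
      congr 2
      ring
    rw [h1, h2]
    exact hy1
end

section
/- Let a ≤ 0, b ≥ 0, and β > 0 be real numbers, and let x₁, x₂ ≥ 0 with x₂ ≤ β x₁ and (x₁, x₂) ≠ (0,0). Then a x₁ + b x₂ ≤ ((a + bβ)/√(1+β²)) · √(x₁² + x₂²). -/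
/-- For `a ≤ 0`, `b ≥ 0`, `β > 0` and `x₁, x₂ ≥ 0` with
`x₂ ≤ β x₁` and `(x₁,x₂) ≠ (0,0)`, one has
`a x₁ + b x₂ ≤ ((a + bβ)/√(1+β²)) · √(x₁² + x₂²)`. -/
theorem lqf_cone_drift_bound_lower
    (a b β : ℝ) (ha : a ≤ 0) (hb : 0 ≤ b) (hβ : 0 < β)
    (x1 x2 : ℝ) (hx1 : 0 ≤ x1) (hx2 : 0 ≤ x2)
    (hcone : x2 ≤ β * x1) (hne : (x1, x2) ≠ (0, 0)) :
    a * x1 + b * x2 ≤ ((a + b * β) / Real.sqrt (1 + β ^ 2))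
      * Real.sqrt (x1 ^ 2 + x2 ^ 2) := by
  have hs0 : 0 < Real.sqrt (1 + β ^ 2) := Real.sqrt_pos.2 (by positivity)
  have hr0 : 0 ≤ Real.sqrt (x1 ^ 2 + x2 ^ 2) := Real.sqrt_nonneg _
  have h1 : Real.sqrt (x1 ^ 2 + x2 ^ 2) ≤ Real.sqrt (1 + β ^ 2) * x1 := by
    have h := Real.sqrt_le_sqrt (show x1 ^ 2 + x2 ^ 2 ≤ (1 + β ^ 2) * x1 ^ 2 by nlinarith)
    rwa [Real.sqrt_mul (by positivity), Real.sqrt_sq hx1] at h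
  have h2 : Real.sqrt (1 + β ^ 2) * x2 ≤ β * Real.sqrt (x1 ^ 2 + x2 ^ 2) := by
    have h := Real.sqrt_le_sqrt
      (show (1 + β ^ 2) * x2 ^ 2 ≤ β ^ 2 * (x1 ^ 2 + x2 ^ 2) by nlinarith)
    rwa [Real.sqrt_mul (by positivity), Real.sqrt_mul (by positivity),
      Real.sqrt_sq hx2, Real.sqrt_sq hβ.le] at h
  rw [div_mul_eq_mul_div, le_div_iff₀ hs0]
  nlinarith [mul_nonneg hb (sub_nonneg.2 h2),
    mul_nonpos_of_nonpos_of_nonneg ha (sub_nonneg.2 h1)]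
end
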